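/- Discrete complex property: if ω_h is piecewise in P_1^-Λ^k on a cubical mesh G_h and satisfies Σ_K [⟨d^k ω_h, μ_h⟩_{L^2Λ^{k+1}(K)} − ⟨ω_h, δ_{k+1} μ_h⟩_{L^2Λ^k(K)}] = 0 for all μ_h in the conforming Q_1^{*,-}Λ^{k+1} finite element space V_{h0}^{Q,*}Λ^{k+1}, then the piecewise exterior derivative d_h^k ω_h (which is piecewise constant, hence in P_1^-Λ^{k+1} on each cell) satisfies the analogous condition at level k+1: Σ_K [⟨d^{k+1}_h(d_h^k ω_h), η_h⟩ − ⟨d_h^k ω_h, δ_{k+2} η_h⟩] = 0 for all η_h ∈ V_{h0}^{Q,*}Λ^{k+2}. In particular d_h^k maps W_h^{def}Λ^k into the null space of d_h^{k+1} in W_h^{def}Λ^{k+1}. -/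

import Mathlib

open MvPolynomial Finset MeasureTheory

/-- Strictly increasing `k`-indices in `{1,…,n}`, modelled as `k`-element subsets of `Fin n`. -/
abbrev Idx (n k : ℕ) := {s : Finset (Fin n) // s.card = k}

/-- A differential `k`-form with polynomial coefficients on `ℝⁿ`:
one polynomial coefficient for each increasing `k`-index. -/
abbrev Form (n k : ℕ) := Idx n k → MvPolynomial (Fin n) ℝ

/-- The sign `(-1)^{#\{j ∈ s : j < i\}}`. -/
noncomputable def sgn {n : ℕ} (s : Finset (Fin n)) (i : Fin n) : ℝ :=
  (-1) ^ (s.filter (· < i)).card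

def eraseIdx {n k : ℕ} (s : Idx n (k+1)) {i : Fin n} (hi : i ∈ s.1) : Idx n k :=
  ⟨s.1.erase i, by simp [Finset.card_erase_of_mem hi, s.2]⟩

def insertIdx {n k : ℕ} (s : Idx n k) {i : Fin n} (hi : i ∉ s.1) : Idx n (k+1) :=
  ⟨insert i s.1, by simp [Finset.card_insert_of_notMem hi, s.2]⟩

/-- The exterior derivative `d^k`. -/
noncomputable def extd (n k : ℕ) : Form n k →ₗ[ℝ] Form n (k+1) where
  toFun ω := fun s => ∑ i ∈ s.1.attach, sgn s.1 i.1 • pderiv i.1 (ω (eraseIdx s i.2))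
  map_add' ω η := by
    funext s
    simp [Finset.sum_add_distrib, smul_add]
  map_smul' c ω := by
    funext s
    simp only [Pi.smul_apply, RingHom.id_apply]
    rw [Finset.smul_sum]
    exact Finset.sum_congr rfl (fun i _ => by rw [(pderiv i.1).map_smul, smul_comm])

/-- The Koszul operator `κ` (contraction with the position vector field). -/
noncomputable def koszul (n k : ℕ) : Form n (k+1) →ₗ[ℝ] Form n k where
  toFun ω := fun s =>
    ∑ i ∈ (s.1ᶜ).attach, sgn s.1 i.1 • (X i.1 * ω (insertIdx s (Finset.mem_compl.mp i.2)))
  map_add' ω η := by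
    funext s
    simp [Finset.sum_add_distrib, mul_add, smul_add]
  map_smul' c ω := by
    funext s
    simp only [Pi.smul_apply, RingHom.id_apply, mul_smul_comm]
    rw [Finset.smul_sum]
    exact Finset.sum_congr rfl (fun i _ => (smul_comm _ _ _))

/-- The codifferential `δ_{k+1}` (the formal adjoint of `d^k` on Euclidean `ℝⁿ`,
which coincides with `(-1)^{(k+1)n} ⋆ d^{n-k-1} ⋆`). -/
noncomputable def codiff (n k : ℕ) : Form n (k+1) →ₗ[ℝ] Form n k where
  toFun ω := fun s =>
    -∑ i ∈ (s.1ᶜ).attach, sgn s.1 i.1 • pderiv i.1 (ω (insertIdx s (Finset.mem_compl.mp i.2)))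
  map_add' ω η := by
    funext s
    simp [Finset.sum_add_distrib, smul_add]
    ring
  map_smul' c ω := by
    funext s
    simp only [Pi.smul_apply, RingHom.id_apply, smul_neg, neg_inj]
    rw [Finset.smul_sum]
    exact Finset.sum_congr rfl (fun i _ => by rw [(pderiv i.1).map_smul, smul_comm])

/-- The operator `κ^δ = ⋆ ∘ κ ∘ ⋆` (exterior multiplication by `Σ xᵢ dxⁱ`, up to sign). -/
noncomputable def kappaDelta (n k : ℕ) : Form n k →ₗ[ℝ] Form n (k+1) where
  toFun ω := fun s => ∑ i ∈ s.1.attach, sgn s.1 i.1 • (X i.1 * ω (eraseIdx s i.2))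
  map_add' ω η := by
    funext s
    simp [Finset.sum_add_distrib, mul_add, smul_add]
  map_smul' c ω := by
    funext s
    simp only [Pi.smul_apply, RingHom.id_apply, mul_smul_comm]
    rw [Finset.smul_sum]
    exact Finset.sum_congr rfl (fun i _ => (smul_comm _ _ _))

/-- Sign of the permutation `(t, tᶜ) ↦ (1,…,n)`, i.e. `⋆ dx^t = starSign t · dx^{tᶜ}`. -/
noncomputable def starSign {n : ℕ} (t : Finset (Fin n)) : ℝ :=
  (-1) ^ (∑ i ∈ t, ((tᶜ).filter (· < i)).card)

/-- The Hodge star operator on `k`-forms on `ℝⁿ`, `k + l = n`. -/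
noncomputable def hodge (n k l : ℕ) (h : k + l = n) : Form n k →ₗ[ℝ] Form n l where
  toFun ω := fun s => starSign (s.1ᶜ) •
    ω ⟨s.1ᶜ, by rw [Finset.card_compl, s.2, Fintype.card_fin]; omega⟩
  map_add' ω η := by funext s; simp [smul_add]
  map_smul' c ω := by funext s; simp only [Pi.smul_apply, RingHom.id_apply]; rw [smul_comm]

/-- The monomial form `x_τ dx^σ`. -/
noncomputable def monForm (n k : ℕ) (τ : Finset (Fin n)) (σ : Idx n k) : Form n k :=
  fun s => if s = σ then ∏ i ∈ τ, X i else 0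

/-- `Q_1^-Λ^k = span{ x_τ dx^σ : |σ| = k, 0 ≤ |τ| ≤ n-k, τ ⊆ σᶜ }`. -/
noncomputable def Qm (n k : ℕ) : Submodule ℝ (Form n k) :=
  Submodule.span ℝ
    {ω | ∃ (τ : Finset (Fin n)) (σ : Idx n k), τ.card ≤ n - k ∧ τ ⊆ (σ.1)ᶜ ∧ ω = monForm n k τ σ}

/-- `Q_1^{*,-}Λ^k = span{ x_τ' dx^σ' : |σ'| = k, 0 ≤ |τ'| ≤ k, τ' ⊆ σ' }`. -/
noncomputable def Qs (n k : ℕ) : Submodule ℝ (Form n k) :=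
  Submodule.span ℝ
    {ω | ∃ (τ : Finset (Fin n)) (σ : Idx n k), τ.card ≤ k ∧ τ ⊆ σ.1 ∧ ω = monForm n k τ σ}

/-- `P_0Λ^k`: forms with constant coefficients. -/
noncomputable def P0 (n k : ℕ) : Submodule ℝ (Form n k) :=
  Submodule.span ℝ {ω | ∃ σ : Idx n k, ω = monForm n k ∅ σ}

/-- The Whitney space `P_1^-Λ^k = P_0Λ^k + κ(P_0Λ^{k+1})`. -/
noncomputable def Pm (n k : ℕ) : Submodule ℝ (Form n k) :=
  P0 n k ⊔ Submodule.map (koszul n k) (P0 n (k+1))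

/-- The star Whitney space `P_1^{*,-}Λ^{k+1} = P_0Λ^{k+1} + κ^δ(P_0Λ^k)`. -/
noncomputable def PsS (n k : ℕ) : Submodule ℝ (Form n (k+1)) :=
  P0 n (k+1) ⊔ Submodule.map (kappaDelta n k) (P0 n k)

/-- `L²` inner product of `k`-forms on the centered box `[-r, r]`. -/
noncomputable def binner (n k : ℕ) (r : Fin n → ℝ) (ω η : Form n k) : ℝ :=
  ∑ s : Idx n k, ∫ x in Set.Icc (fun i => -(r i)) r, eval x (ω s * η s)

/-- `L²` inner product of `k`-forms on the reference cube `T = [-1,1]ⁿ`. -/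
noncomputable def finner (n k : ℕ) (ω η : Form n k) : ℝ :=
  binner n k (fun _ => (1 : ℝ)) ω η

section Aux

variable {n k : ℕ}

lemma pderiv_comm' {σ : Type*} [DecidableEq σ] (i j : σ) (p : MvPolynomial σ ℝ) :
    pderiv i (pderiv j p) = pderiv j (pderiv i p) := by
  induction p using MvPolynomial.induction_on' with
  | monomial s a =>
    by_cases h : i = j
    · subst h; rfl
    · simp only [pderiv_monomial]
      congr 1
      · rw [tsub_tsub, tsub_tsub, add_comm]
      · have h1 : ((s - Finsupp.single j 1 : _ →₀ ℕ)) i = s i := by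
          simp [Finsupp.single_eq_of_ne' (Ne.symm h), Finsupp.sub_apply]
        have h2 : ((s - Finsupp.single i 1 : _ →₀ ℕ)) j = s j := by
          simp [Finsupp.single_eq_of_ne' h, Finsupp.sub_apply]
        rw [h1, h2]
        ring
  | add p q hp hq => simp [hp, hq]

lemma sgn_sq {s : Finset (Fin n)} {i : Fin n} : sgn s i * sgn s i = 1 := by
  rw [sgn, ← pow_add]
  exact Even.neg_one_pow ⟨_, rfl⟩

lemma sgn_erase (s : Finset (Fin n)) (i : Fin n) : sgn (s.erase i) i = sgn s i := by
  unfold sgn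
  congr 2
  ext a
  simp only [Finset.mem_filter, Finset.mem_erase]
  constructor
  · rintro ⟨⟨_, h⟩, h'⟩; exact ⟨h, h'⟩
  · rintro ⟨h, h'⟩; exact ⟨⟨ne_of_lt h', h⟩, h'⟩

lemma sgn_insert_of_lt {s : Finset (Fin n)} {i j : Fin n} (hi : i ∉ s) (h : i < j) :
    sgn (insert i s) j = -sgn s j := by
  unfold sgn
  rw [Finset.filter_insert, if_pos h,
    Finset.card_insert_of_notMem (fun hm => hi (Finset.mem_filter.mp hm).1), pow_succ]
  ring

lemma sgn_insert_of_not_lt {s : Finset (Fin n)} {i j : Fin n} (h : ¬ i < j) :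
    sgn (insert i s) j = sgn s j := by
  unfold sgn
  rw [Finset.filter_insert, if_neg h]

lemma sgn_swap_insert {s : Finset (Fin n)} {i j : Fin n} (hi : i ∉ s) (hj : j ∉ s)
    (hij : i ≠ j) :
    sgn s i * sgn (insert i s) j + sgn s j * sgn (insert j s) i = 0 := by
  rcases lt_or_gt_of_ne hij with h | h
  · rw [sgn_insert_of_lt hi h, sgn_insert_of_not_lt (asymm h)]
    ring
  · rw [sgn_insert_of_not_lt (asymm h), sgn_insert_of_lt hj h]
    ring

lemma sum_erase_antisymm {M : Type*} [AddCommGroup M] {α : Type*} [DecidableEq α]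
    (t : Finset α) (f : α → α → M)
    (hf : ∀ i ∈ t, ∀ j ∈ t, i ≠ j → f i j + f j i = 0) :
    ∑ i ∈ t, ∑ j ∈ t.erase i, f i j = 0 := by
  have h1 : ∑ i ∈ t, ∑ j ∈ t.erase i, f i j
      = ∑ p ∈ (t ×ˢ t).filter fun p => p.2 ≠ p.1, f p.1 p.2 := by
    rw [Finset.sum_filter, Finset.sum_product]
    refine Finset.sum_congr rfl fun i _ => ?_
    rw [← Finset.filter_ne' t i, Finset.sum_filter]
  rw [h1]
  refine Finset.sum_involution (fun p _ => (p.2, p.1)) ?_ ?_ ?_ ?_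
  · intro p hp
    simp only [Finset.mem_filter, Finset.mem_product] at hp
    exact hf p.1 hp.1.1 p.2 hp.1.2 (Ne.symm hp.2)
  · intro p hp _
    simp only [Finset.mem_filter, Finset.mem_product] at hp
    intro h
    exact hp.2 (congrArg Prod.fst h)
  · intro p hp
    simp only [Finset.mem_filter, Finset.mem_product] at hp ⊢
    exact ⟨⟨hp.1.2, hp.1.1⟩, Ne.symm hp.2⟩
  · intro p hp; rfl

/-- Total extension of a form to all finsets. -/
noncomputable def tot (ω : Form n k) (t : Finset (Fin n)) : MvPolynomial (Fin n) ℝ :=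
  if h : t.card = k then ω ⟨t, h⟩ else 0

lemma tot_eq (ω : Form n k) {t : Finset (Fin n)} (h : t.card = k) :
    tot ω t = ω ⟨t, h⟩ := dif_pos h

lemma tot_coe (ω : Form n k) (s : Idx n k) : tot ω s.1 = ω s := dif_pos s.2

lemma codiff_apply (ξ : Form n (k+1)) (s : Idx n k) :
    codiff n k ξ s = -∑ i ∈ s.1ᶜ, sgn s.1 i • pderiv i (tot ξ (insert i s.1)) := by
  have key : ∀ i : {x // x ∈ s.1ᶜ},
      sgn s.1 i.1 • pderiv i.1 (ξ (insertIdx s (Finset.mem_compl.mp i.2)))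
      = sgn s.1 i.1 • pderiv i.1 (tot ξ (insert i.1 s.1)) := by
    intro i
    have hc : (insert i.1 s.1).card = k + 1 := by
      rw [Finset.card_insert_of_notMem (Finset.mem_compl.mp i.2), s.2]
    rw [tot_eq ξ hc]
    rfl
  simp only [codiff, LinearMap.coe_mk, AddHom.coe_mk]
  rw [Finset.sum_congr rfl fun i _ => key i,
    Finset.sum_attach s.1ᶜ (fun i => sgn s.1 i • pderiv i (tot ξ (insert i s.1)))]

lemma extd_apply (ω : Form n k) (t : Idx n (k+1)) :
    extd n k ω t = ∑ j ∈ t.1, sgn t.1 j • pderiv j (tot ω (t.1.erase j)) := by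
  have key : ∀ j : {x // x ∈ t.1},
      sgn t.1 j.1 • pderiv j.1 (ω (eraseIdx t j.2))
      = sgn t.1 j.1 • pderiv j.1 (tot ω (t.1.erase j.1)) := by
    intro j
    have hc : (t.1.erase j.1).card = k := by
      rw [Finset.card_erase_of_mem j.2, t.2]
      rfl
    rw [tot_eq ω hc]
    rfl
  simp only [extd, LinearMap.coe_mk, AddHom.coe_mk]
  rw [Finset.sum_congr rfl fun j _ => key j,
    Finset.sum_attach t.1 (fun j => sgn t.1 j • pderiv j (tot ω (t.1.erase j)))]

lemma koszul_apply (ω : Form n (k+1)) (s : Idx n k) :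
    koszul n k ω s = ∑ i ∈ s.1ᶜ, sgn s.1 i • (X i * tot ω (insert i s.1)) := by
  have key : ∀ i : {x // x ∈ s.1ᶜ},
      sgn s.1 i.1 • (X i.1 * ω (insertIdx s (Finset.mem_compl.mp i.2)))
      = sgn s.1 i.1 • (X i.1 * tot ω (insert i.1 s.1)) := by
    intro i
    have hc : (insert i.1 s.1).card = k + 1 := by
      rw [Finset.card_insert_of_notMem (Finset.mem_compl.mp i.2), s.2]
    rw [tot_eq ω hc]
    rfl
  simp only [koszul, LinearMap.coe_mk, AddHom.coe_mk]
  rw [Finset.sum_congr rfl fun i _ => key i,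
    Finset.sum_attach s.1ᶜ (fun i => sgn s.1 i • (X i * tot ω (insert i s.1)))]

end Aux

section Main

variable {n k : ℕ}

lemma codiff_codiff (η : Form n (k+2)) : codiff n k (codiff n (k+1) η) = 0 := by
  funext s
  rw [codiff_apply]
  have hstep : ∀ i ∈ s.1ᶜ, tot (codiff n (k+1) η) (insert i s.1)
      = -∑ j ∈ (insert i s.1)ᶜ, sgn (insert i s.1) j •
          pderiv j (tot η (insert j (insert i s.1))) := by
    intro i hi
    have hc : (insert i s.1).card = k + 1 := by
      rw [Finset.card_insert_of_notMem (Finset.mem_compl.mp hi), s.2]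
    rw [tot_eq _ hc]
    exact codiff_apply η ⟨insert i s.1, hc⟩
  rw [Finset.sum_congr rfl fun i hi => by rw [hstep i hi]]
  simp only [map_neg, smul_neg, Finset.sum_neg_distrib, neg_neg]
  have hpush : ∀ i ∈ s.1ᶜ,
      sgn s.1 i • pderiv i (∑ j ∈ (insert i s.1)ᶜ, sgn (insert i s.1) j •
        pderiv j (tot η (insert j (insert i s.1))))
      = ∑ j ∈ s.1ᶜ.erase i, sgn s.1 i • sgn (insert i s.1) j •
          pderiv i (pderiv j (tot η (insert j (insert i s.1)))) := by
    intro i hi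
    rw [map_sum, Finset.smul_sum, Finset.compl_insert]
    exact Finset.sum_congr rfl fun j _ => by rw [(pderiv i).map_smul]
  rw [Finset.sum_congr rfl hpush]
  refine sum_erase_antisymm s.1ᶜ _ fun i hi j hj hij => ?_
  have hi' : i ∉ s.1 := Finset.mem_compl.mp hi
  have hj' : j ∉ s.1 := Finset.mem_compl.mp hj
  have hP : pderiv j (pderiv i (tot η (insert i (insert j s.1))))
      = pderiv i (pderiv j (tot η (insert j (insert i s.1)))) := by
    rw [Finset.insert_comm, pderiv_comm']
  rw [smul_smul, smul_smul, hP, ← add_smul, sgn_swap_insert hi' hj' hij, zero_smul]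

lemma pderiv_tot_monForm_empty {k' : ℕ} (σ : Idx n k') (j : Fin n) (u : Finset (Fin n)) :
    pderiv j (tot (monForm n k' ∅ σ) u) = 0 := by
  unfold tot monForm
  split
  · split
    · simp [pderiv_one]
    · simp
  · simp

lemma extd_monForm_empty (σ : Idx n k) : extd n k (monForm n k ∅ σ) = 0 := by
  funext t
  rw [extd_apply]
  simp [pderiv_tot_monForm_empty]

lemma extd_P0 {ω : Form n k} (h : ω ∈ P0 n k) : extd n k ω = 0 := by
  induction h using Submodule.span_induction with
  | mem x hx => obtain ⟨σ, rfl⟩ := hx; exact extd_monForm_empty σ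
  | zero => exact map_zero _
  | add x y _ _ hx hy => rw [map_add, hx, hy, add_zero]
  | smul c x _ hx => rw [_root_.map_smul, hx, smul_zero]

lemma extd_koszul_monForm (σ : Idx n (k+1)) :
    extd n k (koszul n k (monForm n (k+1) ∅ σ)) = ((k : ℝ) + 1) • monForm n (k+1) ∅ σ := by
  set m := monForm n (k+1) ∅ σ with hm
  funext t
  rw [extd_apply]
  have step : ∀ j ∈ t.1, sgn t.1 j • pderiv j (tot (koszul n k m) (t.1.erase j)) = m t := by
    intro j hj
    have hjc : (t.1.erase j).card = k := by
      rw [Finset.card_erase_of_mem hj, t.2]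
      rfl
    rw [tot_eq _ hjc, koszul_apply]
    have hcomp : ∀ i, pderiv j (sgn (t.1.erase j) i • (X i * tot m (insert i (t.1.erase j))))
        = sgn (t.1.erase j) i • (pderiv j (X i) * tot m (insert i (t.1.erase j))) := by
      intro i
      rw [(pderiv j).map_smul, pderiv_mul, pderiv_tot_monForm_empty, mul_zero, add_zero]
    rw [map_sum, Finset.sum_congr rfl fun i _ => hcomp i,
      Finset.sum_eq_single_of_mem j (by simp) (fun i _ hij => by
        rw [pderiv_X_of_ne hij, zero_mul, smul_zero])]
    rw [pderiv_X_self, one_mul, Finset.insert_erase hj, sgn_erase, smul_smul, sgn_sq]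
    rw [one_smul]
    exact tot_coe m t
  rw [Finset.sum_congr rfl step, Finset.sum_const, t.2, ← Nat.cast_smul_eq_nsmul ℝ]
  push_cast
  rfl

lemma extd_koszul_mem {ω : Form n (k+1)} (h : ω ∈ P0 n (k+1)) :
    extd n k (koszul n k ω) ∈ P0 n (k+1) := by
  induction h using Submodule.span_induction with
  | mem x hx =>
    obtain ⟨σ, rfl⟩ := hx
    rw [extd_koszul_monForm]
    exact Submodule.smul_mem _ _ (Submodule.subset_span ⟨σ, rfl⟩)
  | zero => rw [map_zero, map_zero]; exact Submodule.zero_mem _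
  | add x y _ _ hx hy => rw [map_add, map_add]; exact Submodule.add_mem _ hx hy
  | smul c x _ hx => rw [_root_.map_smul, _root_.map_smul]; exact Submodule.smul_mem _ _ hx

lemma extd_Pm_mem_P0 {ω : Form n k} (h : ω ∈ Pm n k) : extd n k ω ∈ P0 n (k+1) := by
  rcases Submodule.mem_sup.mp h with ⟨a, ha, b, hb, rfl⟩
  rcases Submodule.mem_map.mp hb with ⟨c, hc, rfl⟩
  rw [map_add, extd_P0 ha, zero_add]
  exact extd_koszul_mem hc

lemma binner_zero_left (r : Fin n → ℝ) (η : Form n k) : binner n k r 0 η = 0 := by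
  simp [binner]

lemma binner_zero_right (r : Fin n → ℝ) (ω : Form n k) : binner n k r ω 0 = 0 := by
  simp [binner]

end Main

/-- Lemma 4.3, discrete complex property. On a cubical mesh (cells indexed by
`ι`, each cell an axis-parallel box of half-widths `r K`, forms written in cell-centered local
coordinates), let `V ⊆ Π_K Q_1^{*,-}Λ^{k+1}` and `V' ⊆ Π_K Q_1^{*,-}Λ^{k+2}` be the conforming
`Q_1^{*,-}` finite element spaces (abstracted by their shape-function property and the conformity
property `R(δ_{k+2}, V') ⊆ V`, i.e. cellwise `δ` maps `V'` into `V`).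
If `ω_h` is piecewise in `P_1^-Λ^k` and satisfies the defining adjoint condition of
`W_h^{def}Λ^k` against `V`, then `d_h^k ω_h` is piecewise in `P_1^-Λ^{k+1}` and satisfies the
analogous condition at level `k+1` against `V'`; in particular
`d_h^k ω_h ∈ N(d_h^{k+1}) ∩ W_h^{def}Λ^{k+1}`. -/
theorem stmt17 (n k : ℕ) (hk : k + 2 ≤ n)
    (ι : Type) [Fintype ι] (r : ι → Fin n → ℝ) (hr : ∀ K i, 0 < r K i)
    (V : Submodule ℝ (ι → Form n (k+1))) (V' : Submodule ℝ (ι → Form n (k+2)))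
    (hV : ∀ μ ∈ V, ∀ K, μ K ∈ Qs n (k+1))
    (hV' : ∀ η ∈ V', ∀ K, η K ∈ Qs n (k+2))
    (hδ : ∀ η ∈ V', (fun K => codiff n (k+1) (η K)) ∈ V)
    (ωh : ι → Form n k) (hshape : ∀ K, ωh K ∈ Pm n k)
    (hω : ∀ μ ∈ V, ∑ K : ι,
      (binner n (k+1) (r K) (extd n k (ωh K)) (μ K)
        - binner n k (r K) (ωh K) (codiff n k (μ K))) = 0) :
    (∀ K, extd n k (ωh K) ∈ Pm n (k+1)) ∧
      (∀ η ∈ V', ∑ K : ι,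
        (binner n (k+2) (r K) (extd n (k+1) (extd n k (ωh K))) (η K)
          - binner n (k+1) (r K) (extd n k (ωh K)) (codiff n (k+1) (η K))) = 0) ∧
      (∀ K, extd n (k+1) (extd n k (ωh K)) = 0) := by
  have h3 : ∀ K, extd n (k+1) (extd n k (ωh K)) = 0 :=
    fun K => extd_P0 (extd_Pm_mem_P0 (hshape K))
  refine ⟨fun K => Submodule.mem_sup_left (extd_Pm_mem_P0 (hshape K)), ?_, h3⟩
  intro η hη
  have hμ : ∑ K : ι,
      (binner n (k+1) (r K) (extd n k (ωh K)) (codiff n (k+1) (η K))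
        - binner n k (r K) (ωh K) (codiff n k (codiff n (k+1) (η K)))) = 0 :=
    hω _ (hδ η hη)
  have key : ∀ K : ι,
      binner n (k+2) (r K) (extd n (k+1) (extd n k (ωh K))) (η K)
        - binner n (k+1) (r K) (extd n k (ωh K)) (codiff n (k+1) (η K))
      = -(binner n (k+1) (r K) (extd n k (ωh K)) (codiff n (k+1) (η K))
          - binner n k (r K) (ωh K) (codiff n k (codiff n (k+1) (η K)))) := by
    intro K
    rw [h3 K, binner_zero_left, codiff_codiff, binner_zero_right]
    ring
  rw [Finset.sum_congr rfl fun K _ => key K, Finset.sum_neg_distrib, hμ, neg_zero]
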